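/- For N i.i.d. uniform balls in M boxes with M ≥ 3, the surjectivity probability satisfies the recursion p_{N,M} ≤ p_{N,M−1}·q_{N,M}, where p_{N,M} is the probability all M boxes are occupied and q_{N,M} = 1 − (1 − 1/M)^N is the probability that box 1 is occupied. -/

import Mathlib

/-- For `N` i.i.d. uniform balls in `M ≥ 3` boxes, the surjectivity probability
satisfies `p_{N,M} ≤ p_{N,M-1} · q_{N,M}` where
`q_{N,M} = 1 - (1 - 1/M)^N` is the probability that box 1 is occupied. -/
theorem balls_in_boxes_recursion
    (N M : ℕ) (hM : 3 ≤ M) :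
    ((Finset.univ.filter fun f : Fin N → Fin M => Function.Surjective f).card : ℝ) /
        (M : ℝ) ^ N ≤
      (((Finset.univ.filter fun f : Fin N → Fin (M - 1) =>
          Function.Surjective f).card : ℝ) / ((M - 1 : ℕ) : ℝ) ^ N) *
        (1 - (1 - 1 / (M : ℝ)) ^ N) := by
  obtain ⟨m, rfl⟩ : ∃ m, M = m + 1 := ⟨M - 1, by omega⟩
  have hm : 2 ≤ m := by omega
  simp only [Nat.add_sub_cancel]
  set S1 := Finset.univ.filter fun f : Fin N → Fin (m + 1) => Function.Surjective f with hS1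
  set S2 := Finset.univ.filter fun f : Fin N → Fin m => Function.Surjective f with hS2
  set U := Finset.univ.filter fun u : Fin N → Fin (m + 1) => ∃ i, u i = 0 with hU
  -- count of functions hitting 0
  have hcompl : (Finset.univ.filter fun u : Fin N → Fin (m + 1) => ¬ ∃ i, u i = 0)
      = Finset.image (fun v : Fin N → Fin m => fun i => (v i).succ) Finset.univ := by
    ext u
    simp only [Finset.mem_filter, Finset.mem_image, Finset.mem_univ, true_and]
    constructor
    · intro h
      push_neg at h
      exact ⟨fun i => (u i).pred (h i), by funext i; simp⟩
    · rintro ⟨v, rfl⟩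
      push_neg
      intro i
      exact Fin.succ_ne_zero _
  have hinj : Function.Injective fun v : Fin N → Fin m => fun i => (v i).succ :=
    fun v₁ v₂ h => funext fun i => Fin.succ_injective _ (congrFun h i)
  have hUcard : U.card + m ^ N = (m + 1) ^ N := by
    have h1 := Finset.card_filter_add_card_filter_not
      (s := (Finset.univ : Finset (Fin N → Fin (m + 1))))
      (p := fun u => ∃ i, u i = 0)
    rw [hcompl, Finset.card_image_of_injective _ hinj] at h1
    simpa [Fintype.card_fun] using h1
  -- the key inequality via an injection
  have key : S1.card * m ^ N ≤ S2.card * U.card := by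
    have h1 : S1.card * m ^ N = (S1 ×ˢ (Finset.univ : Finset (Fin N → Fin m))).card := by
      simp [Finset.card_product, Fintype.card_fun]
    have h2 : S2.card * U.card = (S2 ×ˢ U).card := by
      simp [Finset.card_product]
    rw [h1, h2]
    apply Finset.card_le_card_of_injOn
      (fun p => (fun i => if h : p.1 i = 0 then p.2 i else (p.1 i).pred h,
                 fun i => if p.1 i = 0 then 0 else (p.2 i).succ))
    · rintro ⟨f, h⟩ hfh
      replace hfh : (f, h) ∈ S1 ×ˢ (Finset.univ : Finset (Fin N → Fin m)) := hfh
      simp only [Finset.mem_product, hS1, Finset.mem_filter, Finset.mem_univ, true_and] at hfh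
      obtain ⟨hf, -⟩ := hfh
      simp only [Finset.mem_coe, Finset.mem_product, hS2, hU, Finset.mem_filter, Finset.mem_univ, true_and]
      constructor
      · intro y
        obtain ⟨i, hi⟩ := hf y.succ
        refine ⟨i, ?_⟩
        have hne : f i ≠ 0 := hi ▸ Fin.succ_ne_zero _
        simp only [dif_neg hne]
        simp [hi]
      · obtain ⟨i, hi⟩ := hf 0
        exact ⟨i, by simp [hi]⟩
    · rintro ⟨f₁, h₁⟩ - ⟨f₂, h₂⟩ - heq
      simp only [Prod.mk.injEq] at heq
      obtain ⟨hg, hu⟩ := heq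
      have hzero : ∀ i, f₁ i = 0 ↔ f₂ i = 0 := by
        intro i
        have := congrFun hu i
        constructor
        · intro h0
          by_contra h0'
          rw [if_pos h0, if_neg h0'] at this
          exact Fin.succ_ne_zero _ this.symm
        · intro h0
          by_contra h0'
          rw [if_neg h0', if_pos h0] at this
          exact Fin.succ_ne_zero _ this
      have hf : f₁ = f₂ := by
        funext i
        have hgi := congrFun hg i
        by_cases h0 : f₁ i = 0
        · rw [h0, ((hzero i).mp h0)]
        · have h0' : f₂ i ≠ 0 := fun h => h0 ((hzero i).mpr h)
          rw [dif_neg h0, dif_neg h0'] at hgi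
          have := congrArg Fin.succ hgi
          rwa [Fin.succ_pred, Fin.succ_pred] at this
      have hh : h₁ = h₂ := by
        funext i
        have hgi := congrFun hg i
        have hui := congrFun hu i
        by_cases h0 : f₁ i = 0
        · rw [dif_pos h0, dif_pos ((hzero i).mp h0)] at hgi
          exact hgi
        · have h0' : f₂ i ≠ 0 := fun h => h0 ((hzero i).mpr h)
          rw [if_neg h0, if_neg h0'] at hui
          exact Fin.succ_injective _ hui
      simp [hf, hh]
  -- pass to the reals
  have hm0 : (0:ℝ) < (m:ℝ) := by exact_mod_cast (by omega : 0 < m)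
  have keyR : (S1.card : ℝ) * (m:ℝ) ^ N ≤ (S2.card : ℝ) * (((m:ℝ) + 1) ^ N - (m:ℝ) ^ N) := by
    have hU' : (U.card : ℝ) = ((m:ℝ) + 1) ^ N - (m:ℝ) ^ N := by
      have h := congrArg (fun k : ℕ => (k : ℝ)) hUcard
      push_cast at h
      linarith
    rw [← hU']
    exact_mod_cast key
  push_cast
  rw [div_mul_eq_mul_div, div_le_div_iff₀ (by positivity) (by positivity)]
  have h1 : 1 - 1/((m:ℝ)+1) = (m:ℝ)/((m:ℝ)+1) := by field_simp; ring
  rw [h1, div_pow, one_sub_div (by positivity : (0:ℝ) < ((m:ℝ)+1)^N).ne']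
  rw [mul_assoc, div_mul_cancel₀ _ (by positivity : ((m:ℝ)+1)^N ≠ 0)]
  exact keyR
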